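/- Let μ_0 > 0 and κ > 0 be fixed real numbers, and define f(μ) = 2(μ-μ_0)^2(6μ+κ) / (2μ_0(6μ+κ) + (8μ+3κ)μ) for μ > 0. Then f is strictly convex on (0, ∞), i.e. f''(μ) > 0 for all μ > 0. -/

import Mathlib

/-- The function `f(μ) = 2(μ-μ₀)²(6μ+κ) / (2μ₀(6μ+κ) + (8μ+3κ)μ)` is strictly convex on
`(0,∞)`, with positive second derivative there. -/
theorem stmt8 (μ₀ κ : ℝ) (hμ₀ : 0 < μ₀) (hκ : 0 < κ) :
    StrictConvexOn ℝ (Set.Ioi (0 : ℝ))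
        (fun μ : ℝ => 2 * (μ - μ₀) ^ 2 * (6 * μ + κ) /
          (2 * μ₀ * (6 * μ + κ) + (8 * μ + 3 * κ) * μ)) ∧
      ∀ μ : ℝ, 0 < μ →
        0 < deriv (deriv (fun μ : ℝ => 2 * (μ - μ₀) ^ 2 * (6 * μ + κ) /
          (2 * μ₀ * (6 * μ + κ) + (8 * μ + 3 * κ) * μ))) μ := by
  set f : ℝ → ℝ := fun μ : ℝ => 2 * (μ - μ₀) ^ 2 * (6 * μ + κ) /
      (2 * μ₀ * (6 * μ + κ) + (8 * μ + 3 * κ) * μ) with hf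
  set q : ℝ → ℝ := fun x => 2 * μ₀ * (6 * x + κ) + (8 * x + 3 * κ) * x with hqdef
  set Nn : ℝ → ℝ := fun x => 96*x^4 + 288*x^3*μ₀ + 72*x^3*κ - 384*x^2*μ₀^2
      + 56*x^2*μ₀*κ + 6*x^2*κ^2 - 128*x*μ₀^2*κ + 8*x*μ₀*κ^2 - 14*μ₀^2*κ^2 with hNdef
  -- positivity of the denominator
  have hqpos : ∀ x : ℝ, 0 < x → 0 < q x := by
    intro x hx
    have : (0:ℝ) < 2 * μ₀ * (6 * x + κ) + (8 * x + 3 * κ) * x := by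
      nlinarith [mul_pos hμ₀ hx, mul_pos hμ₀ hκ, mul_pos hx hx, mul_pos hκ hx]
    simpa [hqdef] using this
  -- derivative of q
  have hq' : ∀ x : ℝ, HasDerivAt q (12 * μ₀ + 16 * x + 3 * κ) x := by
    intro x
    have h1 : HasDerivAt (fun x : ℝ => 2 * μ₀ * (6 * x + κ)) (2 * μ₀ * 6) x := by
      exact (((hasDerivAt_id x).const_mul 6).add_const κ).const_mul (2*μ₀) |>.congr_deriv (by ring)
    have h3 : HasDerivAt (fun x : ℝ => 8 * x + 3 * κ) 8 x := by
      simpa using ((hasDerivAt_id x).const_mul 8).add_const (3*κ)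
    have h2 := h3.mul (hasDerivAt_id x)
    have := h1.add h2
    refine this.congr_deriv ?_
    simp only [id_eq]
    ring
  -- first derivative of f
  have hf1 : ∀ x : ℝ, 0 < x → HasDerivAt f (Nn x / (q x)^2) x := by
    intro x hx
    have hp : HasDerivAt (fun x : ℝ => 2 * (x - μ₀) ^ 2 * (6 * x + κ))
        (4 * (x - μ₀) * (6 * x + κ) + 2 * (x - μ₀)^2 * 6) x := by
      have h2 : HasDerivAt (fun x : ℝ => 2 * (x - μ₀) ^ 2) (2 * (2 * (x - μ₀))) x := by
        have := ((hasDerivAt_id x).sub_const μ₀).pow 2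
        simpa using this.const_mul 2
      have h3 : HasDerivAt (fun x : ℝ => 6 * x + κ) 6 x := by
        simpa using ((hasDerivAt_id x).const_mul 6).add_const κ
      have := h2.mul h3
      refine this.congr_deriv ?_; ring
    have hqne : q x ≠ 0 := (hqpos x hx).ne'
    have := hp.div (hq' x) hqne
    rw [hf]
    refine this.congr_deriv ?_
    rw [hNdef, hqdef]
    field_simp
    ring
  -- the derivative function on (0,∞)
  have hderiv1 : ∀ x : ℝ, 0 < x → deriv f x = Nn x / (q x)^2 := fun x hx =>
    (hf1 x hx).deriv
  -- second derivative
  have hN' : ∀ x : ℝ, HasDerivAt Nn (384*x^3 + 864*x^2*μ₀ + 216*x^2*κ - 768*x*μ₀^2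
      + 112*x*μ₀*κ + 12*x*κ^2 - 128*μ₀^2*κ + 8*μ₀*κ^2) x := by
    intro x
    have h4 := hasDerivAt_pow 4 x
    have h3 := hasDerivAt_pow 3 x
    have h2 := hasDerivAt_pow 2 x
    have h1 := hasDerivAt_id x
    have := ((((((((h4.const_mul 96).add ((h3.const_mul 288).mul_const μ₀)).add
      ((h3.const_mul 72).mul_const κ)).sub ((h2.const_mul 384).mul_const (μ₀^2))).add
      (((h2.const_mul 56).mul_const μ₀).mul_const κ)).add
      ((h2.const_mul 6).mul_const (κ^2))).sub
      (((h1.const_mul 128).mul_const (μ₀^2)).mul_const κ)).add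
      (((h1.const_mul 8).mul_const μ₀).mul_const (κ^2))).sub_const (14*μ₀^2*κ^2)
    rw [hNdef]
    refine this.congr_deriv ?_
    push_cast
    norm_num
    ring
  have hf2 : ∀ x : ℝ, 0 < x → HasDerivAt (fun x => Nn x / (q x)^2)
      (((384*x^3 + 864*x^2*μ₀ + 216*x^2*κ - 768*x*μ₀^2 + 112*x*μ₀*κ + 12*x*κ^2
        - 128*μ₀^2*κ + 8*μ₀*κ^2) * (q x)^2
        - Nn x * (2 * q x ^ 1 * (12 * μ₀ + 16 * x + 3 * κ))) / ((q x)^2)^2) x := by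
    intro x hx
    have hq2 : HasDerivAt (fun x => (q x)^2) (2 * q x ^ 1 * (12 * μ₀ + 16 * x + 3 * κ)) x := by
      exact ((hq' x).pow 2).congr_deriv (by norm_num)
    have hq2ne : (q x)^2 ≠ 0 := pow_ne_zero 2 (hqpos x hx).ne'
    exact (hN' x).div hq2 hq2ne
  -- positivity of the second derivative value
  have key : ∀ x : ℝ, 0 < x →
      0 < ((384*x^3 + 864*x^2*μ₀ + 216*x^2*κ - 768*x*μ₀^2 + 112*x*μ₀*κ + 12*x*κ^2
        - 128*μ₀^2*κ + 8*μ₀*κ^2) * (q x)^2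
        - Nn x * (2 * q x ^ 1 * (12 * μ₀ + 16 * x + 3 * κ))) / ((q x)^2)^2 := by
    intro x hx
    have hq := hqpos x hx
    apply div_pos
    · have hFpos : (0:ℝ) < 9600*x^3*μ₀^2 + 1600*x^3*μ₀*κ + 120*x^3*κ^2 + 4800*x^2*μ₀^2*κ
          + 240*x^2*μ₀*κ^2 + 960*x*μ₀^2*κ^2 + 80*μ₀^3*κ^2 + 100*μ₀^2*κ^3 := by
        have t1 : 0 < x^3*μ₀^2 := mul_pos (pow_pos hx 3) (pow_pos hμ₀ 2)
        have t2 : 0 < x^3*μ₀*κ := mul_pos (mul_pos (pow_pos hx 3) hμ₀) hκ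
        have t3 : 0 < x^3*κ^2 := mul_pos (pow_pos hx 3) (pow_pos hκ 2)
        have t4 : 0 < x^2*μ₀^2*κ := mul_pos (mul_pos (pow_pos hx 2) (pow_pos hμ₀ 2)) hκ
        have t5 : 0 < x^2*μ₀*κ^2 := mul_pos (mul_pos (pow_pos hx 2) hμ₀) (pow_pos hκ 2)
        have t6 : 0 < x*μ₀^2*κ^2 := mul_pos (mul_pos hx (pow_pos hμ₀ 2)) (pow_pos hκ 2)
        have t7 : 0 < μ₀^3*κ^2 := mul_pos (pow_pos hμ₀ 3) (pow_pos hκ 2)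
        have t8 : 0 < μ₀^2*κ^3 := mul_pos (pow_pos hμ₀ 2) (pow_pos hκ 3)
        linarith
      have hfac : ((384*x^3 + 864*x^2*μ₀ + 216*x^2*κ - 768*x*μ₀^2 + 112*x*μ₀*κ + 12*x*κ^2
          - 128*μ₀^2*κ + 8*μ₀*κ^2) * (q x)^2
          - Nn x * (2 * q x ^ 1 * (12 * μ₀ + 16 * x + 3 * κ)))
          = q x * (9600*x^3*μ₀^2 + 1600*x^3*μ₀*κ + 120*x^3*κ^2 + 4800*x^2*μ₀^2*κ
          + 240*x^2*μ₀*κ^2 + 960*x*μ₀^2*κ^2 + 80*μ₀^3*κ^2 + 100*μ₀^2*κ^3) := by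
        rw [hNdef, hqdef]; ring
      rw [hfac]
      exact mul_pos hq hFpos
    · positivity
  -- second derivative of f equals that of Nn/q²
  have hd2 : ∀ x : ℝ, 0 < x → 0 < deriv (deriv f) x := by
    intro x hx
    have hev : deriv f =ᶠ[nhds x] fun y => Nn y / (q y)^2 := by
      filter_upwards [isOpen_Ioi.mem_nhds (show x ∈ Set.Ioi (0:ℝ) from hx)] with y hy
      exact hderiv1 y hy
    rw [Filter.EventuallyEq.deriv_eq hev, (hf2 x hx).deriv]
    exact key x hx
  constructor
  · apply strictConvexOn_of_deriv2_pos (convex_Ioi 0)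
    · apply ContinuousOn.div
      · fun_prop
      · fun_prop
      · intro x hx
        exact (hqpos x hx).ne'
    · intro x hx
      rw [interior_Ioi] at hx
      simpa [Function.iterate_succ_apply', Function.iterate_zero_apply] using hd2 x hx
  · exact hd2
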